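/- Let U₂ : ℝ → ℝ satisfy X = -U₂(X) - U₂(X)^5. Then U₂ is concave on (-∞, 0] and convex on [0, ∞). -/
import Mathlib

private lemma pow5_cvx {a b t s : ℝ} (ha : 0 ≤ a) (hb : 0 ≤ b) (ht : 0 ≤ t)
    (hs : 0 ≤ s) (hts : t + s = 1) : (t * a + s * b) ^ 5 ≤ t * a ^ 5 + s * b ^ 5 := by
  have := (convexOn_pow (𝕜 := ℝ) 5).2 (Set.mem_Ici.2 ha) (Set.mem_Ici.2 hb) ht hs hts
  simpa [smul_eq_mul] using this

private lemma g_anti {u v : ℝ} (h : u < v) : -v - v ^ 5 < -u - u ^ 5 := by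
  have h5 : u ^ 5 < v ^ 5 := Odd.strictMono_pow ⟨2, rfl⟩ h
  linarith

/-- If `X = -U₂ X - (U₂ X)^5` for all `X`, then `U₂` is concave on
`(-∞, 0]` and convex on `[0, ∞)`. -/
theorem stmt_9 (U₂ : ℝ → ℝ)
    (himp : ∀ X : ℝ, X = -U₂ X - (U₂ X) ^ 5) :
    ConcaveOn ℝ (Set.Iic (0 : ℝ)) U₂ ∧ ConvexOn ℝ (Set.Ici (0 : ℝ)) U₂ := by
  -- sign facts
  have hpos : ∀ z : ℝ, z ≤ 0 → 0 ≤ U₂ z := by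
    intro z hz
    by_contra h
    push_neg at h
    have := g_anti h (v := 0)
    have hz' := himp z
    simp at this
    nlinarith
  have hneg : ∀ z : ℝ, 0 ≤ z → U₂ z ≤ 0 := by
    intro z hz
    by_contra h
    push_neg at h
    have := g_anti h (u := 0)
    have hz' := himp z
    simp at this
    nlinarith
  have key : ∀ c d : ℝ, (-c - c ^ 5 ≤ -d - d ^ 5) → d ≤ c := by
    intro c d h
    by_contra hcd
    push_neg at hcd
    exact absurd h (not_le.2 (g_anti hcd))
  constructor
  · refine ⟨convex_Iic 0, ?_⟩
    intro x hx y hy t s ht hs hts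
    simp only [smul_eq_mul]
    set a := U₂ x with ha
    set b := U₂ y with hb
    have ha0 : 0 ≤ a := hpos x hx
    have hb0 : 0 ≤ b := hpos y hy
    have hc := pow5_cvx ha0 hb0 ht hs hts
    set c := U₂ (t * x + s * y) with hcdef
    have hgc : t * x + s * y = -c - c ^ 5 := himp _
    have hgx : x = -a - a ^ 5 := himp x
    have hgy : y = -b - b ^ 5 := himp y
    refine key c (t * a + s * b) ?_
    rw [← hgc, hgx, hgy]
    nlinarith
  · refine ⟨convex_Ici 0, ?_⟩
    intro x hx y hy t s ht hs hts
    simp only [smul_eq_mul]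
    set a := U₂ x with ha
    set b := U₂ y with hb
    have ha0 : a ≤ 0 := hneg x hx
    have hb0 : b ≤ 0 := hneg y hy
    have hc := pow5_cvx (a := -a) (b := -b) (by linarith) (by linarith) ht hs hts
    set c := U₂ (t * x + s * y) with hcdef
    have hgc : t * x + s * y = -c - c ^ 5 := himp _
    have hgx : x = -a - a ^ 5 := himp x
    have hgy : y = -b - b ^ 5 := himp y
    refine key (t * a + s * b) c ?_
    rw [← hgc, hgx, hgy]
    nlinarith
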